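/- Let q ≥ log 2 and let A = {z : d·e^{-r} < |z - o₁| < d·e^r}, B = {z : c·e^{-s} < |z - o₂| < c·e^s} be annuli contained in a domain Ω with o₁, o₂ ∈ ∂Ω, r, s > q, and suppose additionally that both boundary circles of A and both boundary circles of B contain points of ∂Ω. If the q-cores of A and B intersect, then d/2 ≤ c ≤ 2d and |r - s| ≤ log 4. -/

import Mathlib

private lemma cancel_right_pos {u v w : ℝ} (hw : 0 < w) (h : u * w ≤ v * w) : u ≤ v :=
  le_of_mul_le_mul_right h hw

private lemma le_of_sq_le_sq' {x y : ℝ} (hx : 0 ≤ x) (hy : 0 ≤ y) (h : x * x ≤ y * y) :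
    x ≤ y := by nlinarith

set_option maxHeartbeats 1000000 in
/-- If two annuli in a domain `Ω` (centers on `∂Ω`, both boundary circles of each
meeting `∂Ω`) have intersecting `q`-cores (`q ≥ log 2`), then their sizes are
comparable: `d/2 ≤ c ≤ 2d` and `|r - s| ≤ log 4`. -/
theorem comparable_annuli_of_cores_intersect
    (Ω : Set ℂ) (hΩo : IsOpen Ω) (hΩc : IsConnected Ω)
    (o₁ o₂ : ℂ) (d c r s q : ℝ) (hd : 0 < d) (hc : 0 < c)
    (hq : Real.log 2 ≤ q) (hr : q < r) (hs : q < s)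
    (ho₁ : o₁ ∈ frontier Ω) (ho₂ : o₂ ∈ frontier Ω)
    (hA : ∀ z : ℂ, d * Real.exp (-r) < ‖z - o₁‖ →
      ‖z - o₁‖ < d * Real.exp r → z ∈ Ω)
    (hB : ∀ z : ℂ, c * Real.exp (-s) < ‖z - o₂‖ →
      ‖z - o₂‖ < c * Real.exp s → z ∈ Ω)
    (hA_in : ∃ ξ ∈ frontier Ω, ‖ξ - o₁‖ = d * Real.exp (-r))
    (hA_out : ∃ ξ ∈ frontier Ω, ‖ξ - o₁‖ = d * Real.exp r)
    (hB_in : ∃ ξ ∈ frontier Ω, ‖ξ - o₂‖ = c * Real.exp (-s))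
    (hB_out : ∃ ξ ∈ frontier Ω, ‖ξ - o₂‖ = c * Real.exp s)
    (hmeet : ∃ z : ℂ,
      (d * Real.exp (-(r - q)) < ‖z - o₁‖ ∧
        ‖z - o₁‖ < d * Real.exp (r - q)) ∧
      (c * Real.exp (-(s - q)) < ‖z - o₂‖ ∧
        ‖z - o₂‖ < c * Real.exp (s - q))) :
    d / 2 ≤ c ∧ c ≤ 2 * d ∧ |r - s| ≤ Real.log 4 := by
  obtain ⟨z, ⟨hz1, hz2⟩, hz3, hz4⟩ := hmeet
  set X := Real.exp r with hXdef
  set Y := Real.exp s with hYdef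
  set Q := Real.exp q with hQdef
  have hXp : (0:ℝ) < X := Real.exp_pos r
  have hYp : (0:ℝ) < Y := Real.exp_pos s
  have hQp : (0:ℝ) < Q := Real.exp_pos q
  have hQ2 : (2:ℝ) ≤ Q := by
    have := Real.exp_le_exp.mpr hq
    rwa [Real.exp_log (by norm_num : (0:ℝ) < 2)] at this
  have hQX : Q ≤ X := (Real.exp_le_exp.mpr hr.le)
  have hQY : Q ≤ Y := (Real.exp_le_exp.mpr hs.le)
  have hX2 : (2:ℝ) ≤ X := le_trans hQ2 hQX
  have hY2 : (2:ℝ) ≤ Y := le_trans hQ2 hQY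
  -- points of the frontier are not in Ω
  have hnΩ : ∀ w : ℂ, w ∈ frontier Ω → w ∉ Ω := by
    intro w hw
    rw [hΩo.frontier_eq] at hw
    exact hw.2
  -- points not in Ω are outside the open annuli
  have notA : ∀ w : ℂ, w ∉ Ω →
      ‖w - o₁‖ * X ≤ d ∨ d * X ≤ ‖w - o₁‖ := by
    intro w hw
    rcases le_or_gt (d * X) (‖w - o₁‖) with h | h
    · right; exact h
    rcases le_or_gt (‖w - o₁‖) (d * Real.exp (-r)) with h2 | h2
    · left
      rw [← le_div_iff₀ hXp, div_eq_mul_inv, ← Real.exp_neg]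
      exact h2
    · exact absurd (hA w h2 h) hw
  have notB : ∀ w : ℂ, w ∉ Ω →
      ‖w - o₂‖ * Y ≤ c ∨ c * Y ≤ ‖w - o₂‖ := by
    intro w hw
    rcases le_or_gt (c * Y) (‖w - o₂‖) with h | h
    · right; exact h
    rcases le_or_gt (‖w - o₂‖) (c * Real.exp (-s)) with h2 | h2
    · left
      rw [← le_div_iff₀ hYp, div_eq_mul_inv, ← Real.exp_neg]
      exact h2
    · exact absurd (hB w h2 h) hw
  set a := ‖z - o₁‖ with hadef
  set b := ‖z - o₂‖ with hbdef
  set D := ‖o₁ - o₂‖ with hDdef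
  have ha0 : (0:ℝ) ≤ a := norm_nonneg _
  have hb0 : (0:ℝ) ≤ b := norm_nonneg _
  have hD0 : (0:ℝ) ≤ D := norm_nonneg _
  -- triangle inequalities for z
  have ht1 : D ≤ a + b := by
    have h := norm_sub_le_norm_sub_add_norm_sub o₁ z o₂
    rw [norm_sub_rev o₁ z] at h
    linarith [h]
  have ht2 : b ≤ a + D := by
    have h := norm_sub_le_norm_sub_add_norm_sub z o₁ o₂
    linarith [h]
  have ht3 : a ≤ b + D := by
    have h := norm_sub_le_norm_sub_add_norm_sub z o₂ o₁
    rw [norm_sub_rev o₂ o₁] at h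
    linarith [h]
  -- the core hypotheses in multiplied form
  have hz1' : d * Q < a * X := by
    rw [neg_sub, Real.exp_sub, ← mul_div_assoc, div_lt_iff₀ hXp] at hz1
    exact hz1
  have hz2' : a * Q < d * X := by
    rw [Real.exp_sub, ← mul_div_assoc, lt_div_iff₀ hQp] at hz2
    exact hz2
  have hz3' : c * Q < b * Y := by
    rw [neg_sub, Real.exp_sub, ← mul_div_assoc, div_lt_iff₀ hYp] at hz3
    exact hz3
  have hz4' : b * Q < c * Y := by
    rw [Real.exp_sub, ← mul_div_assoc, lt_div_iff₀ hQp] at hz4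
    exact hz4
  have haQ : a * 2 ≤ a * Q := mul_le_mul_of_nonneg_left hQ2 ha0
  have hbQ : b * 2 ≤ b * Q := mul_le_mul_of_nonneg_left hQ2 hb0
  have hdQ : d * 2 ≤ d * Q := mul_le_mul_of_nonneg_left hQ2 hd.le
  have hcQ : c * 2 ≤ c * Q := mul_le_mul_of_nonneg_left hQ2 hc.le
  -- the centers must be close to each other: D·X ≤ d and D·Y ≤ c
  have hkey : D * X ≤ d ∧ D * Y ≤ c := by
    rcases notA o₂ (hnΩ o₂ ho₂) with hDA | hDA
    · rcases notB o₁ (hnΩ o₁ ho₁) with hDB | hDB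
      · rw [norm_sub_rev o₂ o₁] at hDA
        exact ⟨hDA, hDB⟩
      · -- D·X ≤ d but c·Y ≤ D : contradiction
        rw [norm_sub_rev o₂ o₁] at hDA
        exfalso
        have h2b : b * 2 ≤ D := by linarith only [hz4', hbQ, hDB]
        have h5 : (b * 2) * X ≤ D * X := mul_le_mul_of_nonneg_right h2b hXp.le
        have h3' : a * X ≤ (b + D) * X := mul_le_mul_of_nonneg_right ht3 hXp.le
        linarith only [h5, h3', hDA, hz1', hdQ, hd]
    · rcases notB o₁ (hnΩ o₁ ho₁) with hDB | hDB
      · -- D·Y ≤ c but d·X ≤ D : contradiction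
        rw [norm_sub_rev o₂ o₁] at hDA
        exfalso
        have h2a : a * 2 ≤ D := by linarith only [hz2', haQ, hDA]
        have h5 : (a * 2) * Y ≤ D * Y := mul_le_mul_of_nonneg_right h2a hYp.le
        have h3' : b * Y ≤ (a + D) * Y := mul_le_mul_of_nonneg_right ht2 hYp.le
        linarith only [h5, h3', hDB, hz3', hcQ, hc]
      · -- both centers far : contradiction via the meeting point
        rw [norm_sub_rev o₂ o₁] at hDA
        exfalso
        linarith only [haQ, hbQ, hz2', hz4', hDA, hDB, ht1]
  obtain ⟨hDA, hDB⟩ := hkey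
  -- the four boundary inequalities
  -- (1) c·Y ≤ 2·d·X
  obtain ⟨ξ₁, hξ₁f, hξ₁⟩ := hA_out
  have ineq1 : c * Y ≤ 2 * (d * X) := by
    have htri1 : ‖ξ₁ - o₂‖ ≤ d * X + D := by
      have h := norm_sub_le_norm_sub_add_norm_sub ξ₁ o₁ o₂
      rw [hξ₁] at h; exact h
    have htri2 : d * X ≤ ‖ξ₁ - o₂‖ + D := by
      have h := norm_sub_le_norm_sub_add_norm_sub ξ₁ o₂ o₁
      rw [norm_sub_rev o₂ o₁, hξ₁] at h; linarith only [h]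
    rcases notB ξ₁ (hnΩ ξ₁ hξ₁f) with hcase | hcase
    · exfalso
      have h2a : a * 2 ≤ d * X := by linarith only [hz2', haQ]
      have P1 : b * Y ≤ (a + D) * Y := mul_le_mul_of_nonneg_right ht2 hYp.le
      have P2 : (a * 2) * Y ≤ (d * X) * Y := mul_le_mul_of_nonneg_right h2a hYp.le
      have P3 : (d * X) * Y ≤ (‖ξ₁ - o₂‖ + D) * Y :=
        mul_le_mul_of_nonneg_right htri2 hYp.le
      linarith only [P1, P2, P3, hcase, hDB, hz3', hcQ]
    · have hDd : D * 2 ≤ D * X := mul_le_mul_of_nonneg_left hX2 hD0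
      have hdd : d * 2 ≤ d * X := mul_le_mul_of_nonneg_left hX2 hd.le
      linarith only [hcase, htri1, hDd, hDA, hdd, hd]
  -- (2) d·X ≤ 2·c·Y
  obtain ⟨ξ₂, hξ₂f, hξ₂⟩ := hB_out
  have ineq2 : d * X ≤ 2 * (c * Y) := by
    have htri1 : ‖ξ₂ - o₁‖ ≤ c * Y + D := by
      have h := norm_sub_le_norm_sub_add_norm_sub ξ₂ o₂ o₁
      rw [hξ₂, norm_sub_rev o₂ o₁] at h; exact h
    have htri2 : c * Y ≤ ‖ξ₂ - o₁‖ + D := by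
      have h := norm_sub_le_norm_sub_add_norm_sub ξ₂ o₁ o₂
      rw [hξ₂] at h; linarith only [h]
    rcases notA ξ₂ (hnΩ ξ₂ hξ₂f) with hcase | hcase
    · exfalso
      have h2b : b * 2 ≤ c * Y := by linarith only [hz4', hbQ]
      have P1 : a * X ≤ (b + D) * X := mul_le_mul_of_nonneg_right ht3 hXp.le
      have P2 : (b * 2) * X ≤ (c * Y) * X := mul_le_mul_of_nonneg_right h2b hXp.le
      have P3 : (c * Y) * X ≤ (‖ξ₂ - o₁‖ + D) * X :=
        mul_le_mul_of_nonneg_right htri2 hXp.le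
      linarith only [P1, P2, P3, hcase, hDA, hz1', hdQ]
    · have hDc : D * 2 ≤ D * Y := mul_le_mul_of_nonneg_left hY2 hD0
      have hcc : c * 2 ≤ c * Y := mul_le_mul_of_nonneg_left hY2 hc.le
      linarith only [hcase, htri1, hDc, hDB, hcc, hc]
  -- (3) d·Y ≤ 2·c·X
  obtain ⟨ξ₃, hξ₃f, hξ₃⟩ := hA_in
  have ineq3 : d * Y ≤ 2 * (c * X) := by
    have heq : ‖ξ₃ - o₁‖ * X = d := by
      rw [hξ₃, Real.exp_neg, hXdef]
      field_simp
    have htri1 : ‖ξ₃ - o₂‖ ≤ ‖ξ₃ - o₁‖ + D :=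
      norm_sub_le_norm_sub_add_norm_sub ξ₃ o₁ o₂
    have htri2 : ‖ξ₃ - o₁‖ ≤ ‖ξ₃ - o₂‖ + D := by
      have h := norm_sub_le_norm_sub_add_norm_sub ξ₃ o₂ o₁
      rw [norm_sub_rev o₂ o₁] at h; linarith only [h]
    rcases notB ξ₃ (hnΩ ξ₃ hξ₃f) with hcase | hcase
    · have P1 : ‖ξ₃ - o₁‖ * (X * Y) ≤
          (‖ξ₃ - o₂‖ + D) * (X * Y) :=
        mul_le_mul_of_nonneg_right htri2 (mul_pos hXp hYp).le
      have P2 : (‖ξ₃ - o₂‖ * Y) * X ≤ c * X :=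
        mul_le_mul_of_nonneg_right hcase hXp.le
      have P3 : (D * Y) * X ≤ c * X := mul_le_mul_of_nonneg_right hDB hXp.le
      have heqY : ‖ξ₃ - o₁‖ * X * Y = d * Y := by rw [heq]
      linarith only [P1, P2, P3, heqY]
    · exfalso
      have h2b : b * 2 ≤ c * Y := by linarith only [hz4', hbQ]
      have P1 : ‖ξ₃ - o₂‖ * X ≤ (‖ξ₃ - o₁‖ + D) * X :=
        mul_le_mul_of_nonneg_right htri1 hXp.le
      have P2 : (c * Y) * X ≤ ‖ξ₃ - o₂‖ * X :=
        mul_le_mul_of_nonneg_right hcase hXp.le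
      have P3 : (b * 2) * X ≤ (c * Y) * X := mul_le_mul_of_nonneg_right h2b hXp.le
      have P4 : a * X ≤ (b + D) * X := mul_le_mul_of_nonneg_right ht3 hXp.le
      linarith only [P1, P2, P3, P4, heq, hDA, hz1', hdQ, hd]
  -- (4) c·X ≤ 2·d·Y
  obtain ⟨ξ₄, hξ₄f, hξ₄⟩ := hB_in
  have ineq4 : c * X ≤ 2 * (d * Y) := by
    have heq : ‖ξ₄ - o₂‖ * Y = c := by
      rw [hξ₄, Real.exp_neg, hYdef]
      field_simp
    have htri1 : ‖ξ₄ - o₁‖ ≤ ‖ξ₄ - o₂‖ + D := by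
      have h := norm_sub_le_norm_sub_add_norm_sub ξ₄ o₂ o₁
      rw [norm_sub_rev o₂ o₁] at h; exact h
    have htri2 : ‖ξ₄ - o₂‖ ≤ ‖ξ₄ - o₁‖ + D := by
      have h := norm_sub_le_norm_sub_add_norm_sub ξ₄ o₁ o₂
      linarith only [h]
    rcases notA ξ₄ (hnΩ ξ₄ hξ₄f) with hcase | hcase
    · have P1 : ‖ξ₄ - o₂‖ * (Y * X) ≤
          (‖ξ₄ - o₁‖ + D) * (Y * X) :=
        mul_le_mul_of_nonneg_right htri2 (mul_pos hYp hXp).le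
      have P2 : (‖ξ₄ - o₁‖ * X) * Y ≤ d * Y :=
        mul_le_mul_of_nonneg_right hcase hYp.le
      have P3 : (D * X) * Y ≤ d * Y := mul_le_mul_of_nonneg_right hDA hYp.le
      have heqX : ‖ξ₄ - o₂‖ * Y * X = c * X := by rw [heq]
      linarith only [P1, P2, P3, heqX]
    · exfalso
      have h2a : a * 2 ≤ d * X := by linarith only [hz2', haQ]
      have P1 : ‖ξ₄ - o₁‖ * Y ≤ (‖ξ₄ - o₂‖ + D) * Y :=
        mul_le_mul_of_nonneg_right htri1 hYp.le
      have P2 : (d * X) * Y ≤ ‖ξ₄ - o₁‖ * Y :=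
        mul_le_mul_of_nonneg_right hcase hYp.le
      have P3 : (a * 2) * Y ≤ (d * X) * Y := mul_le_mul_of_nonneg_right h2a hYp.le
      have P4 : b * Y ≤ (a + D) * Y := mul_le_mul_of_nonneg_right ht2 hYp.le
      linarith only [P1, P2, P3, P4, heq, hDB, hz3', hcQ, hc]
  -- combine the four inequalities
  have hXYp : (0:ℝ) < X * Y := mul_pos hXp hYp
  have hc2d : c ≤ 2 * d := by
    have h := mul_le_mul ineq1 ineq4 (by positivity) (by positivity)
    have h' : (c * c) * (X * Y) ≤ ((2 * d) * (2 * d)) * (X * Y) := by linarith only [h]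
    exact le_of_sq_le_sq' hc.le (by positivity) (cancel_right_pos hXYp h')
  have hd2c : d ≤ 2 * c := by
    have h := mul_le_mul ineq2 ineq3 (by positivity) (by positivity)
    have h' : (d * d) * (X * Y) ≤ ((2 * c) * (2 * c)) * (X * Y) := by linarith only [h]
    exact le_of_sq_le_sq' hd.le (by positivity) (cancel_right_pos hXYp h')
  have hcdp : (0:ℝ) < c * d := mul_pos hc hd
  have hX2Y : X ≤ 2 * Y := by
    have h := mul_le_mul ineq2 ineq4 (by positivity) (by positivity)
    have h' : (X * X) * (c * d) ≤ ((2 * Y) * (2 * Y)) * (c * d) := by linarith only [h]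
    exact le_of_sq_le_sq' hXp.le (by positivity) (cancel_right_pos hcdp h')
  have hY2X : Y ≤ 2 * X := by
    have h := mul_le_mul ineq1 ineq3 (by positivity) (by positivity)
    have h' : (Y * Y) * (c * d) ≤ ((2 * X) * (2 * X)) * (c * d) := by linarith only [h]
    exact le_of_sq_le_sq' hYp.le (by positivity) (cancel_right_pos hcdp h')
  have hrs : r - s ≤ Real.log 2 := by
    have h2 := Real.log_le_log hXp hX2Y
    rw [hXdef, hYdef, Real.log_exp, Real.log_mul (by norm_num) (Real.exp_ne_zero s),
      Real.log_exp] at h2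
    linarith
  have hsr : s - r ≤ Real.log 2 := by
    have h2 := Real.log_le_log hYp hY2X
    rw [hXdef, hYdef, Real.log_exp, Real.log_mul (by norm_num) (Real.exp_ne_zero r),
      Real.log_exp] at h2
    linarith
  have hlog24 : Real.log 2 ≤ Real.log 4 :=
    Real.log_le_log (by norm_num) (by norm_num)
  exact ⟨by linarith, hc2d, abs_le.mpr ⟨by linarith, by linarith⟩⟩
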